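/- Let (G, H) be a Hecke pair, i.e. H ≤ G and [H : H ∩ gHg⁻¹] < ∞ for all g ∈ G. View G as a subgroup of the permutation group Sym(G/H) via left translation, give Sym(G/H) the topology of pointwise convergence, and let G̃, H̃ denote the closures of the images of G and H respectively. Then H̃ is an open subgroup of G̃, and H̃ is compact (being a closed subgroup of the compact group of permutations fixing the coset H and stabilizing each finite H-orbit of G/H, it is a profinite group); hence G̃ is a totally disconnected locally compact group with compact open subgroup H̃. -/

import Mathlib

/-- The topology of pointwise convergence on the permutation group of a (discrete) set. -/
noncomputable instance permPointwiseTopology (α : Type*) : TopologicalSpace (Equiv.Perm α) :=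
  TopologicalSpace.induced (fun σ : Equiv.Perm α => (σ : α → α))
    (@Pi.topologicalSpace α (fun _ => α) (fun _ => ⊥))

namespace SchlichtingAux

open Set Topology


variable {α : Type*}


theorem perm_isOpen_eval (x y : α) : IsOpen {σ : Equiv.Perm α | σ x = y} := by
  letI : TopologicalSpace α := ⊥
  haveI : DiscreteTopology α := ⟨rfl⟩
  have h : {σ : Equiv.Perm α | σ x = y} =
      (fun σ : Equiv.Perm α => (σ : α → α)) ⁻¹' ((fun f : α → α => f x) ⁻¹' {y}) := rfl
  rw [h]
  exact ((isOpen_discrete _).preimage (continuous_apply x)).preimage continuous_induced_dom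

theorem perm_isClosed_eval (x y : α) : IsClosed {σ : Equiv.Perm α | σ x = y} := by
  letI : TopologicalSpace α := ⊥
  haveI : DiscreteTopology α := ⟨rfl⟩
  have h : {σ : Equiv.Perm α | σ x = y} =
      (fun σ : Equiv.Perm α => (σ : α → α)) ⁻¹' ((fun f : α → α => f x) ⁻¹' {y}) := rfl
  rw [h]
  exact ((isClosed_discrete _).preimage (continuous_apply x)).preimage continuous_induced_dom

theorem perm_mem_closure {A : Set (Equiv.Perm α)} {σ : Equiv.Perm α} :
    σ ∈ closure A ↔ ∀ s : Finset α, ∃ τ ∈ A, ∀ x ∈ s, τ x = σ x := by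
  letI : TopologicalSpace α := ⊥
  haveI : DiscreteTopology α := ⟨rfl⟩
  have hind : Topology.IsInducing (fun σ : Equiv.Perm α => (σ : α → α)) := ⟨rfl⟩
  constructor
  · intro hσ s
    have hU : IsOpen {τ : Equiv.Perm α | ∀ x ∈ s, τ x = σ x} := by
      have : {τ : Equiv.Perm α | ∀ x ∈ s, τ x = σ x} = ⋂ x ∈ s, {τ | τ x = σ x} := by
        ext τ; simp
      rw [this]
      exact isOpen_biInter_finset fun x _ => perm_isOpen_eval x (σ x)
    rcases mem_closure_iff.mp hσ _ hU (fun x _ => rfl) with ⟨τ, hτ1, hτ2⟩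
    exact ⟨τ, hτ2, hτ1⟩
  · intro h
    rw [hind.closure_eq_preimage_closure_image, Set.mem_preimage]
    rw [mem_closure_iff]
    intro V hV hσV
    rcases isOpen_pi_iff.mp hV _ hσV with ⟨I, u, hu, hsub⟩
    rcases h I with ⟨τ, hτA, hτ⟩
    refine ⟨(τ : α → α), hsub fun x hx => ?_, Set.mem_image_of_mem _ hτA⟩
    rw [hτ x hx]; exact (hu x hx).2

theorem key_compact {A : Set (Equiv.Perm α)} (O : α → Set α) (hO : ∀ x, (O x).Finite)
    (hmem : ∀ x, x ∈ O x) (hA : ∀ σ ∈ A, ∀ x, ∀ y ∈ O x, σ y ∈ O x) :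
    IsCompact (closure A) := by
  letI : TopologicalSpace α := ⊥
  haveI : DiscreteTopology α := ⟨rfl⟩
  have hind : Topology.IsInducing (fun σ : Equiv.Perm α => (σ : α → α)) := ⟨rfl⟩
  set S : Set (α → α) := Set.pi Set.univ O with hS
  have hScpt : IsCompact S := isCompact_univ_pi fun x => (hO x).isCompact
  have hScl : IsClosed S := isClosed_set_pi fun x _ => isClosed_discrete _
  have hsub : (fun σ : Equiv.Perm α => (σ : α → α)) '' A ⊆ S := by
    rintro _ ⟨σ, hσ, rfl⟩ x _
    exact hA σ hσ x x (hmem x)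
  -- every function in the closure of the image is a bijection coming from a Perm
  have hrange : closure ((fun σ : Equiv.Perm α => (σ : α → α)) '' A) ⊆
      Set.range (fun σ : Equiv.Perm α => (σ : α → α)) := by
    intro f hf
    have hagree : ∀ s : Finset α, ∃ σ ∈ A, ∀ x ∈ s, (σ : α → α) x = f x := by
      intro s
      have hU : IsOpen {g : α → α | ∀ x ∈ s, g x = f x} := by
        have : {g : α → α | ∀ x ∈ s, g x = f x} = Set.pi ↑s (fun x => {f x}) := by
          ext g; simp [Set.mem_pi]
        rw [this]
        exact isOpen_set_pi s.finite_toSet fun x _ => isOpen_discrete _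
      rcases mem_closure_iff.mp hf _ hU (fun x _ => rfl) with ⟨g, hg1, σ, hσA, rfl⟩
      exact ⟨σ, hσA, hg1⟩
    have hinj : Function.Injective f := by
      intro a b hab
      classical
      rcases hagree {a, b} with ⟨σ, _, hσ⟩
      have ha := hσ a (by simp)
      have hb := hσ b (by simp)
      exact σ.injective (by rw [ha, hb, hab])
    have hsurj : Function.Surjective f := by
      intro y
      classical
      rcases hagree (hO y).toFinset with ⟨σ, hσA, hσ⟩
      have hmaps : Set.MapsTo σ (O y) (O y) := fun z hz => hA σ hσA y z hz
      have hbij : Set.BijOn σ (O y) (O y) :=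
        ((hO y).injOn_iff_bijOn_of_mapsTo hmaps).mp (σ.injective.injOn)
      rcases hbij.surjOn (hmem y) with ⟨z, hz, hzy⟩
      exact ⟨z, by rw [← hσ z ((hO y).mem_toFinset.mpr hz)]; exact hzy⟩
    exact ⟨Equiv.ofBijective f ⟨hinj, hsurj⟩, rfl⟩
  have himg : (fun σ : Equiv.Perm α => (σ : α → α)) '' closure A =
      closure ((fun σ : Equiv.Perm α => (σ : α → α)) '' A) := by
    rw [hind.closure_eq_preimage_closure_image, Set.image_preimage_eq_inter_range]
    exact Set.inter_eq_self_of_subset_left hrange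
  rw [hind.isCompact_iff, himg]
  exact hScpt.of_isClosed_subset isClosed_closure
    ((closure_minimal hsub hScl))


instance permTopGroup : IsTopologicalGroup (Equiv.Perm α) where
  continuous_mul := by
    letI : TopologicalSpace α := ⊥
    haveI : DiscreteTopology α := ⟨rfl⟩
    apply continuous_induced_rng.mpr
    apply continuous_pi
    intro x
    apply continuous_discrete_rng.mpr
    intro y
    show IsOpen ((fun p : Equiv.Perm α × Equiv.Perm α => (p.1 * p.2 : Equiv.Perm α) x) ⁻¹' {y})
    have h : ((fun p : Equiv.Perm α × Equiv.Perm α => (p.1 * p.2 : Equiv.Perm α) x) ⁻¹' {y}) =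
        ⋃ z : α, {σ : Equiv.Perm α | σ z = y} ×ˢ {τ : Equiv.Perm α | τ x = z} := by
      ext ⟨σ, τ⟩
      simp [Equiv.Perm.mul_apply, eq_comm]
    rw [h]
    exact isOpen_iUnion fun z => (perm_isOpen_eval z y).prod (perm_isOpen_eval x z)
  continuous_inv := by
    letI : TopologicalSpace α := ⊥
    haveI : DiscreteTopology α := ⟨rfl⟩
    apply continuous_induced_rng.mpr
    apply continuous_pi
    intro x
    apply continuous_discrete_rng.mpr
    intro y
    show IsOpen ((fun σ : Equiv.Perm α => (σ⁻¹ : Equiv.Perm α) x) ⁻¹' {y})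
    have h : ((fun σ : Equiv.Perm α => (σ⁻¹ : Equiv.Perm α) x) ⁻¹' {y}) =
        {σ : Equiv.Perm α | σ y = x} := by
      ext σ
      simp only [Set.mem_preimage, Set.mem_singleton_iff, Set.mem_setOf_eq,
        Equiv.Perm.inv_def, Equiv.symm_apply_eq]
      exact eq_comm
    rw [h]
    exact perm_isOpen_eval y x

instance permT2 : T2Space (Equiv.Perm α) := by
  letI : TopologicalSpace α := ⊥
  haveI : DiscreteTopology α := ⟨rfl⟩
  have hemb : Topology.IsEmbedding (fun σ : Equiv.Perm α => (σ : α → α)) :=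
    ⟨⟨rfl⟩, fun a b h => Equiv.coe_fn_injective h⟩
  exact hemb.t2Space

instance permTotDisc : TotallyDisconnectedSpace (Equiv.Perm α) := by
  letI : TopologicalSpace α := ⊥
  haveI : DiscreteTopology α := ⟨rfl⟩
  have hemb : Topology.IsEmbedding (fun σ : Equiv.Perm α => (σ : α → α)) :=
    ⟨⟨rfl⟩, fun a b h => Equiv.coe_fn_injective h⟩
  exact hemb.isTotallyDisconnected_range.mp
    (isTotallyDisconnected_of_totallyDisconnectedSpace _)




theorem orbit_finite {G : Type*} [Group G] (H : Subgroup G)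
    (hecke : ∀ g : G, (Subgroup.map (MulAut.conj g).toMonoidHom H).relIndex H ≠ 0)
    (x : G ⧸ H) : (MulAction.orbit H x).Finite := by
  obtain ⟨g, rfl⟩ := QuotientGroup.mk_surjective x
  have hstab : MulAction.stabilizer H ((g : G ⧸ H)) =
      (Subgroup.map (MulAut.conj g).toMonoidHom H).subgroupOf H := by
    ext h
    simp only [MulAction.mem_stabilizer_iff, Subgroup.mem_subgroupOf,
      Subgroup.mem_map, MulEquiv.coe_toMonoidHom, MulAut.conj_apply]
    constructor
    · intro hh
      have : ((h : G) * g : G ⧸ H) = (g : G ⧸ H) := by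
        rw [← hh]; rfl
      have h2 : ((h : G) * g)⁻¹ * g ∈ H := QuotientGroup.eq.mp this
      refine ⟨g⁻¹ * (h : G) * g, ?_, by group⟩
      have h3 := H.inv_mem h2
      have h4 : (((h : G) * g)⁻¹ * g)⁻¹ = g⁻¹ * (h : G) * g := by group
      rwa [h4] at h3
    · rintro ⟨k, hk, hgk⟩
      have heq : ((h : G) * g : G ⧸ H) = (g : G ⧸ H) := by
        apply QuotientGroup.eq.mpr
        rw [← hgk]
        have h5 : (g * k * g⁻¹ * g)⁻¹ * g = k⁻¹ := by group
        rw [h5]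
        exact H.inv_mem hk
      calc h • ((g : G ⧸ H)) = (((h : G) * g : G) : G ⧸ H) := rfl
        _ = (g : G ⧸ H) := heq
  have hfin : Finite (H ⧸ MulAction.stabilizer H ((g : G ⧸ H))) := by
    rw [hstab]
    have := hecke g
    rw [Subgroup.relIndex] at this
    have h2 := Nat.card_ne_zero.mp this
    exact h2.2
  have := (MulAction.orbitEquivQuotientStabilizer H ((g : G ⧸ H)))
  have : Finite (MulAction.orbit H ((g : G ⧸ H))) := Finite.of_equiv _ this.symm
  exact Set.toFinite _

end SchlichtingAux

open SchlichtingAux Set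

/-- Schlichting completion of a Hecke pair `(G, H)`: the closure `H̃` of the image of `H` in
`Sym(G/H)` (with the topology of pointwise convergence) is a compact subgroup which is open
in the closure `G̃` of the image of `G`; moreover `G̃` is totally disconnected and locally
compact. -/

theorem schlichting_completion
    {G : Type*} [Group G] (H : Subgroup G)
    (hecke : ∀ g : G, (Subgroup.map (MulAut.conj g).toMonoidHom H).relIndex H ≠ 0) :
    IsCompact (closure (⇑(MulAction.toPermHom G (G ⧸ H)) '' (H : Set G))) ∧
    (∃ U : Set (Equiv.Perm (G ⧸ H)), IsOpen U ∧
      closure (⇑(MulAction.toPermHom G (G ⧸ H)) '' (H : Set G)) =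
        U ∩ closure (Set.range ⇑(MulAction.toPermHom G (G ⧸ H)))) ∧
    TotallyDisconnectedSpace ↥(closure (Set.range ⇑(MulAction.toPermHom G (G ⧸ H)))) ∧
    LocallyCompactSpace ↥(closure (Set.range ⇑(MulAction.toPermHom G (G ⧸ H)))) := by
  classical
  set φ := MulAction.toPermHom G (G ⧸ H) with hφ
  set A : Set (Equiv.Perm (G ⧸ H)) := ⇑φ '' (H : Set G) with hA
  set R : Set (Equiv.Perm (G ⧸ H)) := Set.range ⇑φ with hR
  set pt : G ⧸ H := ((1 : G) : G ⧸ H) with hpt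
  have hφ_apply : ∀ (g : G) (x : G ⧸ H), (φ g) x = g • x := fun g x => rfl
  -- Part 1: compactness
  have hcpt : IsCompact (closure A) := by
    apply key_compact (fun x => MulAction.orbit H x) (orbit_finite H hecke)
      (fun x => MulAction.mem_orbit_self x)
    rintro _ ⟨h, hh, rfl⟩ x y hy
    rcases hy with ⟨k, rfl⟩
    refine ⟨(⟨h, hh⟩ : H) * k, ?_⟩
    show ((⟨h, hh⟩ : H) * k) • x = (φ h) (k • x)
    rw [mul_smul]
    rfl
  -- subset : A ⊆ R
  have hAR : A ⊆ R := Set.image_subset_range _ _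
  -- the open set U
  set U : Set (Equiv.Perm (G ⧸ H)) := {σ | σ pt = pt} with hU
  have hUopen : IsOpen U := perm_isOpen_eval pt pt
  have hAU : A ⊆ U := by
    rintro _ ⟨h, hh, rfl⟩
    show (φ h) pt = pt
    rw [hφ_apply]
    show (((h * 1 : G)) : G ⧸ H) = ((1 : G) : G ⧸ H)
    apply QuotientGroup.eq.mpr
    simpa using H.inv_mem hh
  -- Part 2: the equality
  have hUeq : closure A = U ∩ closure R := by
    apply Set.Subset.antisymm
    · exact Set.subset_inter (closure_minimal hAU (perm_isClosed_eval pt pt))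
        (closure_mono hAR)
    · rintro σ ⟨hσU, hσR⟩
      rw [perm_mem_closure]
      intro s
      rcases perm_mem_closure.mp hσR (insert pt s) with ⟨τ, ⟨g, rfl⟩, hτ⟩
      have hg : g ∈ H := by
        have h1 : (φ g) pt = pt := by
          rw [hτ pt (Finset.mem_insert_self pt s)]; exact hσU
        rw [hφ_apply] at h1
        have h2 : (((g * 1 : G)) : G ⧸ H) = ((1 : G) : G ⧸ H) := h1
        have h3 := QuotientGroup.eq.mp h2
        simpa using H.inv_mem (by simpa using h3)
      exact ⟨φ g, ⟨g, hg, rfl⟩, fun x hx => hτ x (Finset.mem_insert_of_mem hx)⟩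
  refine ⟨hcpt, ⟨U, hUopen, hUeq⟩, inferInstance, ?_⟩
  -- Part 4: local compactness
  set Γ : Subgroup (Equiv.Perm (G ⧸ H)) := φ.range.topologicalClosure with hΓ
  have hΓset : (Γ : Set (Equiv.Perm (G ⧸ H))) = closure R := by
    rw [hΓ, Subgroup.topologicalClosure_coe, MonoidHom.coe_range]
  have hAΓ : closure A ⊆ (Γ : Set (Equiv.Perm (G ⧸ H))) := by
    rw [hΓset]; exact closure_mono hAR
  haveI : IsTopologicalGroup ↥Γ := inferInstance
  have hLC : LocallyCompactSpace ↥Γ := by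
    set K : Set ↥Γ := Subtype.val ⁻¹' closure A with hK
    have hKcpt : IsCompact K := by
      rw [Subtype.isCompact_iff]
      have : Subtype.val '' K = closure A := by
        apply Set.Subset.antisymm
        · rintro _ ⟨x, hx, rfl⟩; exact hx
        · intro y hy
          exact ⟨⟨y, hAΓ hy⟩, hy, rfl⟩
      rw [this]; exact hcpt
    have hKnhds : K ∈ nhds (1 : ↥Γ) := by
      have hKeq : K = Subtype.val ⁻¹' U := by
        rw [hK, hUeq, Set.preimage_inter]
        have : (Subtype.val ⁻¹' closure R : Set ↥Γ) = Set.univ := by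
          ext x; simp only [Set.mem_preimage, Set.mem_univ, iff_true]
          have := x.2; rwa [← hΓset]
        rw [this, Set.inter_univ]
      rw [hKeq]
      apply IsOpen.mem_nhds (hUopen.preimage continuous_subtype_val)
      show ((1 : ↥Γ) : Equiv.Perm (G ⧸ H)) pt = pt
      rfl
    exact hKcpt.locallyCompactSpace_of_mem_nhds_of_group hKnhds
  have hLC' : LocallyCompactSpace ↥((Γ : Set (Equiv.Perm (G ⧸ H)))) := hLC
  exact hΓset ▸ hLC'
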